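/- With notation as above, the geometric multiplicity of the eigenvalue 1 of γ(1) = exp(J·Q) equals 2, i.e., dim ker(γ(1) - I_{2d}) = 2, for every integer d ≥ 1. -/

import Mathlib

open Matrix

noncomputable def upperShift (d : ℕ) : Matrix (Fin d) (Fin d) ℝ :=
  Matrix.of fun i j => if (j : ℕ) = (i : ℕ) + 1 then 1 else 0

noncomputable def stdJ (d : ℕ) : Matrix (Fin d ⊕ Fin d) (Fin d ⊕ Fin d) ℝ :=
  Matrix.fromBlocks 0 (-1) 1 0

noncomputable def quadQ (d : ℕ) : Matrix (Fin d ⊕ Fin d) (Fin d ⊕ Fin d) ℝ :=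
  Matrix.fromBlocks 0 (upperShift d) (upperShift d)ᵀ 0

lemma upperShift_pow (d k : ℕ) :
    upperShift d ^ k = Matrix.of fun (i j : Fin d) =>
      (if (j : ℕ) = (i : ℕ) + k then (1 : ℝ) else 0) := by
  induction k with
  | zero =>
    ext i j
    simp [Matrix.one_apply, Fin.ext_iff, eq_comm]
  | succ k ih =>
    ext i j
    rw [pow_succ, ih, Matrix.mul_apply]
    simp only [Matrix.of_apply, upperShift]
    rcases lt_or_ge ((i : ℕ) + k) d with h | h
    · rw [Finset.sum_eq_single (⟨(i : ℕ) + k, h⟩ : Fin d)]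
      · simp [Nat.add_assoc]
      · intro b _ hb
        have : (b : ℕ) ≠ (i : ℕ) + k := by simpa [Fin.ext_iff] using hb
        simp [this]
      · simp
    · have h1 : ∀ l : Fin d, (l : ℕ) ≠ (i : ℕ) + k := fun l => (l.isLt.trans_le h).ne
      have h2 : (j : ℕ) ≠ (i : ℕ) + (k + 1) := by have := j.isLt; omega
      simp [h1, h2]

lemma upperShift_pow_self (d : ℕ) : upperShift d ^ d = 0 := by
  rw [upperShift_pow]
  ext i j
  have := j.isLt
  have : (j : ℕ) ≠ (i : ℕ) + d := by omega
  simp [this]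

lemma fromBlocks_diag_pow {d : ℕ} (B C : Matrix (Fin d) (Fin d) ℝ) (k : ℕ) :
    (Matrix.fromBlocks B 0 0 C) ^ k = Matrix.fromBlocks (B ^ k) 0 0 (C ^ k) := by
  induction k with
  | zero => simp [Matrix.fromBlocks_one]
  | succ k ih => rw [pow_succ, pow_succ, pow_succ, ih, Matrix.fromBlocks_multiply]; simp

lemma JQ_eq (d : ℕ) :
    stdJ d * quadQ d = Matrix.fromBlocks (-(upperShift d)ᵀ) 0 0 (upperShift d) := by
  rw [stdJ, quadQ, Matrix.fromBlocks_multiply]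
  simp

lemma JQ_pow (d : ℕ) : (stdJ d * quadQ d) ^ d = 0 := by
  rw [JQ_eq, fromBlocks_diag_pow, neg_pow, ← Matrix.transpose_pow, upperShift_pow_self]
  simp

lemma ker_exp_sub_one {n : Type*} [Fintype n] [DecidableEq n] (M : Matrix n n ℝ) (m : ℕ)
    (hM : M ^ m = 0) :
    LinearMap.ker (Matrix.toLin' (NormedSpace.exp M - 1)) = LinearMap.ker (Matrix.toLin' M) := by
  have hpow : ∀ k, m ≤ k → M ^ k = 0 := fun k hk => by
    rw [← Nat.sub_add_cancel hk, pow_add, hM, mul_zero]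
  set V : Matrix n n ℝ := ∑ k ∈ Finset.range m, (((k + 2).factorial : ℝ)⁻¹) • M ^ k with hV
  set U : Matrix n n ℝ := 1 + M * V with hU
  have hMV : Commute M V :=
    Commute.sum_right _ _ _ fun k _ => ((Commute.refl M).pow_right k).smul_right _
  have hMU : Commute M U :=
    (Commute.one_right M).add_right ((Commute.refl M).mul_right hMV)
  have hexp : NormedSpace.exp M
      = ∑ k ∈ Finset.range (m + 2), ((k.factorial : ℝ)⁻¹) • M ^ k := by
    rw [NormedSpace.exp_eq_tsum ℝ]
    refine tsum_eq_sum fun k hk => ?_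
    rw [hpow k (by simp [Finset.mem_range] at hk; omega), smul_zero]
  have key : NormedSpace.exp M - 1 = M * U := by
    rw [hexp, Finset.sum_range_succ', Finset.sum_range_succ']
    simp only [Nat.factorial_zero, Nat.factorial_one, Nat.cast_one, inv_one, one_smul, pow_zero,
      pow_one]
    rw [hU, mul_add, mul_one, hV, ← mul_assoc, Finset.mul_sum]
    have hterm : ∀ k : ℕ, M * M * (((k + 2).factorial : ℝ)⁻¹ • M ^ k)
        = ((k + 1 + 1).factorial : ℝ)⁻¹ • M ^ (k + 1 + 1) := by
      intro k
      rw [mul_smul_comm, ← pow_two, ← pow_add]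
      rw [show 2 + k = k + 1 + 1 by omega]
    simp_rw [hterm]
    norm_num
    abel
  have hUnit : IsUnit U := by
    refine IsNilpotent.isUnit_one_add ⟨m, ?_⟩
    rw [hMV.mul_pow, hM, zero_mul]
  obtain ⟨W, hW⟩ := hUnit.exists_left_inv
  have hinj : Function.Injective (Matrix.toLin' U) := by
    intro x y hxy
    have h1 : ∀ z : n → ℝ, Matrix.toLin' W (Matrix.toLin' U z) = z := fun z => by
      rw [← LinearMap.comp_apply, ← Matrix.toLin'_mul, hW, Matrix.toLin'_one,
        LinearMap.id_apply]
    rw [← h1 x, ← h1 y, hxy]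
  rw [key, hMU.eq, Matrix.toLin'_mul]
  exact LinearMap.ker_comp_of_ker_eq_bot _ (LinearMap.ker_eq_bot.mpr hinj)

lemma ker_block {d : ℕ} (hd : 1 ≤ d) :
    LinearMap.ker (Matrix.toLin'
        (Matrix.fromBlocks (-(upperShift d)ᵀ) 0 0 (upperShift d))) =
      Submodule.span ℝ (Set.range
        ![Pi.single (Sum.inl (⟨d - 1, by omega⟩ : Fin d)) (1 : ℝ),
          Pi.single (Sum.inr (⟨0, hd⟩ : Fin d)) (1 : ℝ)]) := by
  set lastd : Fin d := ⟨d - 1, by omega⟩ with hlastd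
  set z : Fin d := ⟨0, hd⟩ with hz
  set v1 : (Fin d ⊕ Fin d) → ℝ := Pi.single (Sum.inl lastd) (1 : ℝ) with hv1
  set v2 : (Fin d ⊕ Fin d) → ℝ := Pi.single (Sum.inr z) (1 : ℝ) with hv2
  apply le_antisymm
  · intro x hx
    rw [LinearMap.mem_ker, Matrix.toLin'_apply] at hx
    have heqL : ∀ j : Fin d, (j : ℕ) + 1 < d → x (Sum.inl j) = 0 := by
      intro j hj
      have h0 := congrFun hx (Sum.inl (⟨(j : ℕ) + 1, hj⟩ : Fin d))
      rw [Matrix.mulVec, dotProduct, Fintype.sum_sum_type] at h0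
      simp only [Matrix.fromBlocks_apply₁₁, Matrix.fromBlocks_apply₁₂,
        Matrix.zero_apply, zero_mul, Finset.sum_const_zero, add_zero,
        Matrix.neg_apply, Matrix.transpose_apply, upperShift, Matrix.of_apply,
        Pi.zero_apply] at h0
      rw [Finset.sum_eq_single j] at h0
      · simpa using h0
      · intro b _ hb
        have : ¬ ((j : ℕ) + 1 = (b : ℕ) + 1) := fun h => hb (Fin.ext (by omega))
        simp [this, Fin.val_inj, Ne.symm hb]
      · simp
    have heqR : ∀ j : Fin d, 1 ≤ (j : ℕ) → x (Sum.inr j) = 0 := by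
      intro j hj
      have hjlt : (j : ℕ) - 1 < d := by have := j.isLt; omega
      have h0 := congrFun hx (Sum.inr (⟨(j : ℕ) - 1, hjlt⟩ : Fin d))
      rw [Matrix.mulVec, dotProduct, Fintype.sum_sum_type] at h0
      simp only [Matrix.fromBlocks_apply₂₁, Matrix.fromBlocks_apply₂₂,
        Matrix.zero_apply, zero_mul, Finset.sum_const_zero, zero_add,
        upperShift, Matrix.of_apply, Pi.zero_apply] at h0
      rw [Finset.sum_eq_single j] at h0
      · have : (j : ℕ) = (j : ℕ) - 1 + 1 := by omega
        rw [if_pos this] at h0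
        simpa using h0
      · intro b _ hb
        have : ¬ ((b : ℕ) = (j : ℕ) - 1 + 1) := fun h => hb (Fin.ext (by omega))
        simp [this]
      · simp
    have hxeq : x = x (Sum.inl lastd) • v1 + x (Sum.inr z) • v2 := by
      funext s
      rcases s with j | j
      · by_cases hj : j = lastd
        · subst hj
          simp [hv1, hv2, Pi.single_apply]
        · have h1 : (j : ℕ) + 1 < d := by
            rcases lt_or_ge ((j : ℕ) + 1) d with h | h
            · exact h
            · exact absurd (Fin.ext (by have := j.isLt; simp [hlastd]; omega)) hj
          simp [heqL j h1, hv1, hv2, Pi.single_apply, hj]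
      · by_cases hj : j = z
        · subst hj
          simp [hv1, hv2, Pi.single_apply]
        · have h1 : 1 ≤ (j : ℕ) := by
            rcases Nat.eq_zero_or_pos (j : ℕ) with h | h
            · exact absurd (Fin.ext (by simp [hz, h])) hj
            · exact h
          simp [heqR j h1, hv1, hv2, Pi.single_apply, hj]
    rw [hxeq]
    refine Submodule.add_mem _ (Submodule.smul_mem _ _ ?_) (Submodule.smul_mem _ _ ?_)
    · exact Submodule.subset_span ⟨0, rfl⟩
    · exact Submodule.subset_span ⟨1, rfl⟩
  · rw [Submodule.span_le]
    rintro y ⟨i, rfl⟩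
    fin_cases i
    · show v1 ∈ _
      rw [SetLike.mem_coe, LinearMap.mem_ker, Matrix.toLin'_apply, hv1, Matrix.mulVec_single]
      funext s
      rcases s with i | i
      · have : ¬ ((i : ℕ) = (lastd : ℕ) + 1) := by have := i.isLt; simp [hlastd]; omega
        simp [upperShift, this]
      · simp
    · show v2 ∈ _
      rw [SetLike.mem_coe, LinearMap.mem_ker, Matrix.toLin'_apply, hv2, Matrix.mulVec_single]
      funext s
      rcases s with i | i
      · simp
      · have : ¬ ((z : ℕ) = (i : ℕ) + 1) := by simp [hz]
        simp [upperShift, this]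

/-- The geometric multiplicity of the eigenvalue 1 of γ(1) = exp(J·Q) equals 2,
i.e. dim ker(γ(1) - I) = 2, for every d ≥ 1. -/
theorem stmt2 (d : ℕ) (hd : 1 ≤ d) :
    Module.finrank ℝ
      (LinearMap.ker (Matrix.toLin' (NormedSpace.exp (stdJ d * quadQ d) - 1))) = 2 := by
  rw [ker_exp_sub_one _ d (JQ_pow d), JQ_eq, ker_block hd]
  have hli : LinearIndependent ℝ
      ![(Pi.single (Sum.inl (⟨d - 1, by omega⟩ : Fin d)) (1 : ℝ) : (Fin d ⊕ Fin d) → ℝ),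
        (Pi.single (Sum.inr (⟨0, hd⟩ : Fin d)) (1 : ℝ) : (Fin d ⊕ Fin d) → ℝ)] := by
    rw [LinearIndependent.pair_iff]
    intro s t hst
    have h1 := congrFun hst (Sum.inl (⟨d - 1, by omega⟩ : Fin d))
    have h2 := congrFun hst (Sum.inr (⟨0, hd⟩ : Fin d))
    simp [Pi.single_apply] at h1 h2
    exact ⟨h1, h2⟩
  rw [finrank_span_eq_card hli, Fintype.card_fin]
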